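/- Let β, r, θ, c > 0 with β > r and 0 < θ < (β - r)(1+c), and let (ū, 1-ū) with 0 < ū < 1 be the unique positive fixed point of V₁ (so θ = (β ū - r)(1 + c ū)/ū). Set q(ū) = 1 - ū + ū(1-ū)(β - θ/(1 + c ū)²), and let λ₁, λ₂ be the complex eigenvalues of the Jacobian matrix of V₁ at (ū, 1-ū). Then: if q(ū) < 1 both eigenvalues satisfy |λᵢ| < 1 (the fixed point is attractive); if q(ū) > 1 both satisfy |λᵢ| > 1 (repelling); and if q(ū) = 1 then λ₁, λ₂ are a complex-conjugate pair with |λ₁| = |λ₂| = 1 (nonhyperbolic). -/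

import Mathlib

/-- The Jacobian matrix of `V₁(u,v) = (u(2-u) - uv, βuv + (1-r)v - θuv/(1+cu))`
at the point `(u,v)`. -/
noncomputable def J1 (β r θ c : ℝ) (u v : ℝ) : Matrix (Fin 2) (Fin 2) ℝ :=
  !![2 - 2 * u - v, -u;
     β * v - θ * v / (1 + c * u) ^ 2,
     β * u + 1 - r - θ * u / (1 + c * u)]

private lemma conj_aux' (x y : ℝ) :
    (starRingEnd ℂ) ((x : ℂ) + (y : ℂ) * Complex.I) = (x : ℂ) + ((-y : ℝ) : ℂ) * Complex.I := by
  simp only [map_add, map_mul, Complex.conj_ofReal, Complex.conj_I, Complex.ofReal_neg]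
  ring

private lemma charpoly_fin_two' (M : Matrix (Fin 2) (Fin 2) ℝ) :
    M.charpoly = Polynomial.X ^ 2 - Polynomial.C M.trace * Polynomial.X
      + Polynomial.C M.det := by
  rw [Matrix.charpoly, Matrix.det_fin_two, Matrix.trace_fin_two, Matrix.det_fin_two,
    Matrix.charmatrix_apply_eq, Matrix.charmatrix_apply_eq,
    Matrix.charmatrix_apply_ne _ _ _ (by decide), Matrix.charmatrix_apply_ne _ _ _ (by decide)]
  simp only [map_add, map_mul, map_sub]
  ring

private lemma helperLT (u q a b : ℝ) (hu0 : 0 < u) (hu1 : u < 1) (hq1u : 1 - u < q)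
    (h1 : q < 1) (e1 : a ^ 2 - b ^ 2 - (2 - u) * a + q = 0)
    (e2 : b * (2 * a - (2 - u)) = 0) : a ^ 2 + b ^ 2 < 1 := by
  rcases mul_eq_zero.mp e2 with hb0 | hb
  · have hP : (a - 1) * (a - (1 - u)) = (1 - u) - q := by
      linear_combination e1 + b * hb0
    have hP' : (a - 1) * (a - (1 - u)) < 0 := by rw [hP]; linarith
    rcases mul_neg_iff.mp hP' with ⟨h2, h3⟩ | ⟨h2, h3⟩
    · linarith
    · have := mul_pos (show (0:ℝ) < 1 - a by linarith) (show (0:ℝ) < 1 + a by linarith)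
      nlinarith [sq_nonneg b, hb0]
  · have hval : a ^ 2 + b ^ 2 = q := by linear_combination (-1 : ℝ) * e1 + a * hb
    linarith

private lemma helperGT (u q a b : ℝ) (hu0 : 0 < u) (hu1 : u < 1)
    (h1 : 1 < q) (e1 : a ^ 2 - b ^ 2 - (2 - u) * a + q = 0)
    (e2 : b * (2 * a - (2 - u)) = 0) : 1 < a ^ 2 + b ^ 2 := by
  rcases mul_eq_zero.mp e2 with hb0 | hb
  · exfalso
    have hD : (2 * a - (2 - u)) ^ 2 = (2 - u) ^ 2 - 4 * q + 4 * b ^ 2 := by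
      linear_combination 4 * e1
    nlinarith [sq_nonneg (2 * a - (2 - u))]
  · have hval : a ^ 2 + b ^ 2 = q := by linear_combination (-1 : ℝ) * e1 + a * hb
    linarith

private lemma helperEQ (u a b : ℝ) (hu0 : 0 < u) (hu1 : u < 1)
    (e1 : a ^ 2 - b ^ 2 - (2 - u) * a + 1 = 0)
    (e2 : b * (2 * a - (2 - u)) = 0) :
    2 * a - (2 - u) = 0 ∧ b ^ 2 = 1 - (2 - u) ^ 2 / 4 := by
  have hb : 2 * a - (2 - u) = 0 := by
    rcases mul_eq_zero.mp e2 with hb0 | hb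
    · exfalso
      have hD : (2 * a - (2 - u)) ^ 2 = (2 - u) ^ 2 - 4 + 4 * b ^ 2 := by
        linear_combination 4 * e1
      nlinarith [sq_nonneg (2 * a - (2 - u))]
    · exact hb
  refine ⟨hb, ?_⟩
  nlinarith [e1, hb]

private lemma mu_root (x y p : ℝ) (hx : 2 * x = p) (hy : x ^ 2 + y ^ 2 = 1) :
    ((x : ℂ) + (y : ℂ) * Complex.I) ^ 2 - (p : ℂ) * ((x : ℂ) + (y : ℂ) * Complex.I) + 1 = 0 := by
  have hy' : (x : ℂ) ^ 2 + (y : ℂ) ^ 2 = 1 := by exact_mod_cast hy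
  have hx' : 2 * (x : ℂ) = (p : ℂ) := by exact_mod_cast hx
  linear_combination (-1 : ℂ) * hy' + ((x : ℂ) + (y : ℂ) * Complex.I) * hx'
    + (y : ℂ) ^ 2 * Complex.I_sq

set_option maxHeartbeats 1600000 in
/-- Stability classification of the unique positive fixed point `(ū, 1-ū)` of `V₁`:
with `q(ū) = 1 - ū + ū(1-ū)(β - θ/(1+cū)²)`, if `q(ū) < 1` the two complex eigenvalues
of the Jacobian at `(ū, 1-ū)` have modulus `< 1` (attractive), if `q(ū) > 1` they have
modulus `> 1` (repelling), and if `q(ū) = 1` they form a complex-conjugate pair of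
modulus `1` (nonhyperbolic). -/
theorem stability_positive_fixed_point_V1 (β r θ c u : ℝ)
    (hβ : 0 < β) (hr : 0 < r) (hθ : 0 < θ) (hc : 0 < c)
    (hβr : r < β) (hθub : θ < (β - r) * (1 + c))
    (hu0 : 0 < u) (hu1 : u < 1)
    (hfix : θ = (β * u - r) * (1 + c * u) / u)
    (q : ℝ) (hq : q = 1 - u + u * (1 - u) * (β - θ / (1 + c * u) ^ 2)) :
    (q < 1 → ∀ l : ℂ,
        Polynomial.aeval l (J1 β r θ c u (1 - u)).charpoly = 0 → ‖l‖ < 1) ∧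
    (1 < q → ∀ l : ℂ,
        Polynomial.aeval l (J1 β r θ c u (1 - u)).charpoly = 0 → 1 < ‖l‖) ∧
    (q = 1 → ∃ μ : ℂ, μ.im ≠ 0 ∧ ‖μ‖ = 1 ∧
        ∀ l : ℂ, Polynomial.aeval l (J1 β r θ c u (1 - u)).charpoly = 0 ↔
          (l = μ ∨ l = (starRingEnd ℂ) μ)) := by
  have hcu : (0:ℝ) < 1 + c * u := by nlinarith
  have hdet : (J1 β r θ c u (1 - u)).det = q := by
    rw [J1, Matrix.det_fin_two_of, hq, hfix]
    field_simp
    ring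
  have htr : (J1 β r θ c u (1 - u)).trace = 2 - u := by
    rw [J1, Matrix.trace_fin_two_of, hfix]
    field_simp
    ring
  have hroot : ∀ l : ℂ, Polynomial.aeval l (J1 β r θ c u (1 - u)).charpoly = 0 ↔
      l ^ 2 - ((2 - u : ℝ) : ℂ) * l + (q : ℂ) = 0 := by
    intro l
    rw [charpoly_fin_two', htr, hdet]
    simp
  clear hdet htr
  have hparts : ∀ l : ℂ, l ^ 2 - ((2 - u : ℝ) : ℂ) * l + (q : ℂ) = 0 →
      (l.re ^ 2 - l.im ^ 2 - (2 - u) * l.re + q = 0) ∧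
      (l.im * (2 * l.re - (2 - u)) = 0) := by
    intro l h
    rw [Complex.ext_iff] at h
    simp [pow_two, Complex.mul_re, Complex.mul_im] at h
    constructor <;> nlinarith [h.1, h.2]
  have habs : ∀ l : ℂ, (‖l‖) ^ 2 = l.re ^ 2 + l.im ^ 2 := by
    intro l; rw [Complex.sq_norm, Complex.normSq_apply]; ring
  have hE : q = 1 - u + (1 - u) * (β * c * u ^ 2 + r) / (1 + c * u) := by
    rw [hq, hfix]; field_simp; ring
  have hq1u : 1 - u < q := by
    rw [hE]
    have h2 : (0:ℝ) < β * c * u ^ 2 + r := by positivity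
    have h1 : 0 < (1 - u) * (β * c * u ^ 2 + r) :=
      mul_pos (by linarith) h2
    have := div_pos h1 hcu
    linarith
  refine ⟨?_, ?_, ?_⟩
  · intro h1 l hl
    rw [hroot l] at hl
    obtain ⟨e1, e2⟩ := hparts l hl
    have hsq : (‖l‖) ^ 2 < 1 := by
      rw [habs]
      exact helperLT u q l.re l.im hu0 hu1 hq1u h1 e1 e2
    nlinarith [norm_nonneg l]
  · intro h1 l hl
    rw [hroot l] at hl
    obtain ⟨e1, e2⟩ := hparts l hl
    have hsq : 1 < (‖l‖) ^ 2 := by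
      rw [habs]
      exact helperGT u q l.re l.im hu0 hu1 h1 e1 e2
    nlinarith [norm_nonneg l]
  · intro hq1
    have harg : 0 < 1 - (2 - u) ^ 2 / 4 := by nlinarith
    set s : ℝ := Real.sqrt (1 - (2 - u) ^ 2 / 4) with hs_def
    have hs : s ^ 2 = 1 - (2 - u) ^ 2 / 4 := Real.sq_sqrt harg.le
    have hspos : 0 < s := Real.sqrt_pos.mpr harg
    refine ⟨((2 - u) / 2 : ℝ) + (s : ℝ) * Complex.I, ?_, ?_, ?_⟩
    · simpa using hspos.ne'
    · have hn : Complex.normSq (((2 - u) / 2 : ℝ) + (s : ℝ) * Complex.I) = 1 := by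
        simp [Complex.normSq_apply]
        nlinarith [hs]
      rw [Complex.norm_def, hn, Real.sqrt_one]
    · intro l
      rw [hroot l]
      constructor
      · intro hl
        obtain ⟨e1, e2⟩ := hparts l hl
        rw [hq1] at e1
        obtain ⟨hb, hb2⟩ := helperEQ u l.re l.im hu0 hu1 e1 e2
        have hb3 : (l.im - s) * (l.im + s) = 0 := by
          linear_combination hb2 - hs
        rcases mul_eq_zero.mp hb3 with h | h
        · left
          rw [Complex.ext_iff]
          constructor <;> simp <;> linarith
        · right
          rw [conj_aux', Complex.ext_iff]
          constructor <;>
            simp only [Complex.add_re, Complex.add_im, Complex.ofReal_re, Complex.ofReal_im,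
              Complex.mul_re, Complex.mul_im, Complex.I_re, Complex.I_im] <;>
            · push_cast; linarith
      · intro hl
        rw [hq1]
        have hq1c : ((1:ℝ) : ℂ) = 1 := by norm_num
        rcases hl with hl | hl
        · rw [hl, hq1c]
          exact mu_root ((2 - u) / 2) s (2 - u) (by ring) (by nlinarith [hs])
        · rw [hl, hq1c]
          rw [conj_aux']
          exact mu_root ((2 - u) / 2) (-s) (2 - u) (by ring) (by nlinarith [hs])
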